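/- Let ℤ₂ denote the ring of 2-adic integers, and let a, b, c be the bijections of ℤ₂ given by a(x) = x + 1, b(x) = −x, c(x) = 5x (note 5 is a unit in ℤ₂). Let G = ⟨a, b, c⟩ be the subgroup of bijections of ℤ₂ they generate. Then for every n ≥ 0, the set {g ∈ G : g(0) ∈ 2ⁿℤ₂} is a subgroup of G and equals ⟨a^{2ⁿ}, b, c⟩. -/

import Mathlib

open Equiv Subgroup

private lemma perm_apply_inv_self (f : Equiv.Perm ℤ_[2]) (x : ℤ_[2]) : f (f⁻¹ x) = x :=
  Equiv.apply_symm_apply f x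

private lemma perm_inv_apply_self (f : Equiv.Perm ℤ_[2]) (x : ℤ_[2]) : f⁻¹ (f x) = x :=
  Equiv.symm_apply_apply f x

private lemma five_ne : (5:ℤ_[2]) ≠ 0 := by
  intro h
  have : ((5:ℤ) : ℤ_[2]) = 0 := by exact_mod_cast h
  rw [Int.cast_eq_zero] at this
  norm_num at this

private lemma five_unit : IsUnit (5:ℤ_[2]) := by
  rw [PadicInt.isUnit_iff]
  refine le_antisymm (PadicInt.norm_le_one _) ?_
  by_contra hlt
  push_neg at hlt
  have h5 : ((5:ℤ) : ℤ_[2]) = (5:ℤ_[2]) := by push_cast; ring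
  rw [← h5, PadicInt.norm_int_lt_one_iff_dvd] at hlt
  norm_num at hlt

private lemma apow_nat {a : Equiv.Perm ℤ_[2]} (ha : ∀ x, a x = x + 1) :
    ∀ (k : ℕ) (x : ℤ_[2]), (a ^ k) x = x + k := by
  intro k
  induction k with
  | zero => simp
  | succ j ih =>
    intro x
    rw [pow_succ, Equiv.Perm.mul_apply, ha, ih]
    push_cast; ring

private lemma apow_int {a : Equiv.Perm ℤ_[2]} (ha : ∀ x, a x = x + 1) :
    ∀ (s : ℤ) (x : ℤ_[2]), (a ^ s) x = x + s := by
  intro s x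
  cases s with
  | ofNat k => rw [Int.ofNat_eq_coe, zpow_natCast, apow_nat ha]; push_cast; ring
  | negSucc k =>
    rw [zpow_negSucc]
    apply (a ^ (k+1)).injective
    rw [perm_apply_inv_self, apow_nat ha]
    push_cast; ring

private lemma cpow_nat {c : Equiv.Perm ℤ_[2]} (hc : ∀ x, c x = 5 * x) :
    ∀ (m : ℕ) (x : ℤ_[2]), (c ^ m) x = 5 ^ m * x := by
  intro m
  induction m with
  | zero => simp
  | succ j ih => intro x; rw [pow_succ, Equiv.Perm.mul_apply, hc, ih]; ring

private lemma bc_mult {b c : Equiv.Perm ℤ_[2]} (hb : ∀ x, b x = -x) (hc : ∀ x, c x = 5 * x) :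
    ∀ μ ∈ Subgroup.closure ({b, c} : Set (Equiv.Perm ℤ_[2])),
      ∃ (e k : ℕ) (ε : ℤˣ), ∀ x : ℤ_[2], 5 ^ e * μ x = ((ε : ℤ) : ℤ_[2]) * 5 ^ k * x := by
  intro μ hμ
  induction hμ using Subgroup.closure_induction with
  | mem g hg =>
    rcases hg with rfl | rfl
    · exact ⟨0, 0, -1, fun x => by rw [hb]; push_cast; ring⟩
    · exact ⟨0, 1, 1, fun x => by rw [hc]; push_cast; ring⟩
  | one => exact ⟨0, 0, 1, fun x => by simp⟩
  | mul g₁ g₂ h₁ h₂ ih₁ ih₂ =>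
    obtain ⟨e₁, k₁, ε₁, H₁⟩ := ih₁
    obtain ⟨e₂, k₂, ε₂, H₂⟩ := ih₂
    refine ⟨e₁ + e₂, k₁ + k₂, ε₁ * ε₂, fun x => ?_⟩
    have A := H₁ (g₂ x)
    have B := H₂ x
    rw [Equiv.Perm.mul_apply]
    push_cast
    push_cast at A B
    linear_combination (5:ℤ_[2]) ^ e₂ * A + ((ε₁:ℤ):ℤ_[2]) * 5 ^ k₁ * B
  | inv g hg ih =>
    obtain ⟨e, k, ε, H⟩ := ih
    refine ⟨k, e, ε, fun x => ?_⟩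
    have A := H (g⁻¹ x)
    rw [perm_apply_inv_self] at A
    have hsq : ((ε:ℤ):ℤ_[2]) * ((ε:ℤ):ℤ_[2]) = 1 := by
      rcases Int.units_eq_one_or ε with rfl | rfl <;> norm_num
    linear_combination (-((ε:ℤ):ℤ_[2])) * A - (5:ℤ_[2]) ^ k * g⁻¹ x * hsq

private lemma main_decomp {a b c : Equiv.Perm ℤ_[2]}
    (ha : ∀ x, a x = x + 1) (hb : ∀ x, b x = -x) (hc : ∀ x, c x = 5 * x) :
    ∀ g ∈ Subgroup.closure ({a, b, c} : Set (Equiv.Perm ℤ_[2])),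
      ∃ (m : ℕ) (s : ℤ) (μ : Equiv.Perm ℤ_[2]),
        μ ∈ Subgroup.closure ({b, c} : Set (Equiv.Perm ℤ_[2])) ∧
        ∀ x : ℤ_[2], 5 ^ m * g x = 5 ^ m * μ x + s := by
  intro g hg
  induction hg using Subgroup.closure_induction with
  | mem g hg =>
    rcases hg with rfl | rfl | rfl
    · exact ⟨0, 1, 1, one_mem _, fun x => by rw [ha]; simp⟩
    · exact ⟨0, 0, g, subset_closure (Set.mem_insert _ _), fun x => by simp⟩
    · exact ⟨0, 0, g, subset_closure (Set.mem_insert_of_mem _ rfl), fun x => by simp⟩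
  | one => exact ⟨0, 0, 1, one_mem _, fun x => by simp⟩
  | mul g₁ g₂ h₁ h₂ ih₁ ih₂ =>
    obtain ⟨m₁, s₁, μ₁, hμ₁, H₁⟩ := ih₁
    obtain ⟨m₂, s₂, μ₂, hμ₂, H₂⟩ := ih₂
    obtain ⟨e, k, ε, Hε⟩ := bc_mult hb hc μ₁ hμ₁
    refine ⟨m₁ + m₂ + e, 5 ^ (m₂ + e) * s₁ + (ε : ℤ) * 5 ^ (k + m₁) * s₂, μ₁ * μ₂,
      mul_mem hμ₁ hμ₂, fun x => ?_⟩
    have E1 := H₁ (g₂ x)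
    have E2 := H₂ x
    have E3 := Hε (g₂ x)
    have E4 := Hε (μ₂ x)
    rw [Equiv.Perm.mul_apply, Equiv.Perm.mul_apply]
    push_cast
    push_cast at E1 E2 E3 E4
    linear_combination (5:ℤ_[2]) ^ (m₂ + e) * E1 + ((ε:ℤ):ℤ_[2]) * 5 ^ (k + m₁) * E2
      + (5:ℤ_[2]) ^ (m₁ + m₂) * E3 - (5:ℤ_[2]) ^ (m₁ + m₂) * E4
  | inv g hg ih =>
    obtain ⟨m, s, μ, hμ, H⟩ := ih
    obtain ⟨e, k, ε, Hε⟩ := bc_mult hb hc μ⁻¹ (inv_mem hμ)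
    refine ⟨e + m, -((ε : ℤ) * 5 ^ k * s), μ⁻¹, inv_mem hμ, fun x => ?_⟩
    have F1 := H (g⁻¹ x)
    rw [perm_apply_inv_self] at F1
    have F2 := Hε (μ (g⁻¹ x))
    rw [perm_inv_apply_self] at F2
    have F3 := Hε x
    push_cast
    push_cast at F1 F2 F3
    linear_combination (-((ε:ℤ):ℤ_[2]) * 5 ^ k) * F1 + (5:ℤ_[2]) ^ m * F2 - (5:ℤ_[2]) ^ m * F3

theorem stmt16 (a b c : Equiv.Perm ℤ_[2])
    (ha : ∀ x, a x = x + 1) (hb : ∀ x, b x = -x) (hc : ∀ x, c x = 5 * x) (n : ℕ) :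
    {g : Equiv.Perm ℤ_[2] | g ∈ Subgroup.closure {a, b, c} ∧ ∃ y : ℤ_[2], g 0 = 2 ^ n * y}
      = ((Subgroup.closure {a ^ 2 ^ n, b, c} : Subgroup (Equiv.Perm ℤ_[2])) :
          Set (Equiv.Perm ℤ_[2])) := by
  have haH : a ^ 2 ^ n ∈ Subgroup.closure ({a ^ 2 ^ n, b, c} : Set (Equiv.Perm ℤ_[2])) :=
    subset_closure (Set.mem_insert _ _)
  have hbH : b ∈ Subgroup.closure ({a ^ 2 ^ n, b, c} : Set (Equiv.Perm ℤ_[2])) :=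
    subset_closure (Set.mem_insert_of_mem _ (Set.mem_insert _ _))
  have hcH : c ∈ Subgroup.closure ({a ^ 2 ^ n, b, c} : Set (Equiv.Perm ℤ_[2])) :=
    subset_closure (Set.mem_insert_of_mem _ (Set.mem_insert_of_mem _ rfl))
  -- elements of the RHS are affine with translation in 2^n ℤ₂
  have hform : ∀ g ∈ Subgroup.closure ({a ^ 2 ^ n, b, c} : Set (Equiv.Perm ℤ_[2])),
      ∃ (u : ℤ_[2]ˣ) (y : ℤ_[2]), ∀ x, g x = (u : ℤ_[2]) * x + 2 ^ n * y := by
    intro g hg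
    induction hg using Subgroup.closure_induction with
    | mem g hg =>
      rcases hg with rfl | rfl | rfl
      · exact ⟨1, 1, fun x => by rw [apow_nat ha]; push_cast; ring⟩
      · exact ⟨-1, 0, fun x => by rw [hb]; push_cast; ring⟩
      · exact ⟨five_unit.unit, 0, fun x => by rw [hc, IsUnit.unit_spec]; ring⟩
    | one => exact ⟨1, 0, fun x => by simp⟩
    | mul g₁ g₂ h₁ h₂ ih₁ ih₂ =>
      obtain ⟨u₁, y₁, H₁⟩ := ih₁
      obtain ⟨u₂, y₂, H₂⟩ := ih₂
      refine ⟨u₁ * u₂, (u₁ : ℤ_[2]) * y₂ + y₁, fun x => ?_⟩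
      rw [Equiv.Perm.mul_apply, H₂, H₁]
      push_cast; ring
    | inv g hg ih =>
      obtain ⟨u, y, H⟩ := ih
      refine ⟨u⁻¹, -((u⁻¹ : ℤ_[2]ˣ) : ℤ_[2]) * y, fun x => ?_⟩
      have hui : (u : ℤ_[2]) * ((u⁻¹ : ℤ_[2]ˣ) : ℤ_[2]) = 1 := u.mul_inv
      have key : g (((u⁻¹ : ℤ_[2]ˣ) : ℤ_[2]) * x + 2 ^ n * (-((u⁻¹ : ℤ_[2]ˣ) : ℤ_[2]) * y)) = x := by
        rw [H]
        linear_combination (x - 2 ^ n * y) * hui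
      calc g⁻¹ x = g⁻¹ (g (((u⁻¹ : ℤ_[2]ˣ) : ℤ_[2]) * x
          + 2 ^ n * (-((u⁻¹ : ℤ_[2]ˣ) : ℤ_[2]) * y))) := by rw [key]
        _ = _ := perm_inv_apply_self _ _
  ext g
  simp only [Set.mem_setOf_eq, SetLike.mem_coe]
  constructor
  · rintro ⟨hg, y, hy⟩
    obtain ⟨m, s, μ, hμ, H⟩ := main_decomp ha hb hc g hg
    obtain ⟨e, k, ε, Hε⟩ := bc_mult hb hc μ hμ
    have hμ0 : μ 0 = 0 := by
      have := Hε 0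
      rw [mul_zero] at this
      exact (mul_eq_zero.mp this).resolve_left (pow_ne_zero _ five_ne)
    have hs : (s : ℤ_[2]) = 5 ^ m * (2 ^ n * y) := by
      have := H 0
      rw [hy, hμ0, mul_zero, zero_add] at this
      exact this.symm
    have hdvd : (2 ^ n : ℤ) ∣ s := by
      have h2 : ((2:ℕ) : ℤ_[2]) ^ n ∣ (s : ℤ_[2]) := ⟨5 ^ m * y, by push_cast [hs]; ring⟩
      have := (PadicInt.pow_p_dvd_int_iff (p := 2) n s).mp h2
      exact_mod_cast this
    obtain ⟨q, hq⟩ := hdvd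
    have hasH : a ^ s ∈ Subgroup.closure ({a ^ 2 ^ n, b, c} : Set (Equiv.Perm ℤ_[2])) := by
      have : a ^ s = (a ^ 2 ^ n) ^ q := by
        rw [hq, zpow_mul]
        congr 1
      rw [this]
      exact zpow_mem haH q
    have hμH : μ ∈ Subgroup.closure ({a ^ 2 ^ n, b, c} : Set (Equiv.Perm ℤ_[2])) := by
      refine (closure_le _).mpr ?_ hμ
      intro z hz
      rcases hz with rfl | rfl
      · exact hbH
      · exact hcH
    have hgdec : g = (c ^ m)⁻¹ * a ^ s * c ^ m * μ := by
      apply Equiv.ext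
      intro x
      apply (c ^ m).injective
      have lhs : (c ^ m) ((((c ^ m)⁻¹ * a ^ s * c ^ m * μ) : Equiv.Perm ℤ_[2]) x)
          = 5 ^ m * μ x + s := by
        simp only [Equiv.Perm.mul_apply]
        rw [perm_apply_inv_self, apow_int ha, cpow_nat hc]
      rw [lhs, cpow_nat hc, H]
    rw [hgdec]
    exact mul_mem (mul_mem (mul_mem (inv_mem (pow_mem hcH m)) hasH) (pow_mem hcH m)) hμH
  · intro hg
    have hGle : Subgroup.closure ({a ^ 2 ^ n, b, c} : Set (Equiv.Perm ℤ_[2]))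
        ≤ Subgroup.closure ({a, b, c} : Set (Equiv.Perm ℤ_[2])) := by
      refine (closure_le _).mpr ?_
      intro z hz
      rcases hz with rfl | rfl | rfl
      · exact pow_mem (subset_closure (Set.mem_insert _ _)) _
      · exact subset_closure (Set.mem_insert_of_mem _ (Set.mem_insert _ _))
      · exact subset_closure (Set.mem_insert_of_mem _ (Set.mem_insert_of_mem _ rfl))
    refine ⟨hGle hg, ?_⟩
    obtain ⟨u, y, H⟩ := hform g hg
    exact ⟨y, by rw [H 0]; ring⟩
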